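/- arXiv:1306.6714 — 5 statements merged into one kernel-verified Lean document; each statement's English description precedes it below -/
import Mathlib

section
/- For every integer d ≥ 2, the eigenmoment sequence agrees with the moments of the normalized semicircle distribution up to order seven: μ_d(k) = c_k for all 1 ≤ k ≤ 7. In particular μ_d(4) = 1/8 and μ_d(6) = 5/64. -/
open scoped BigOperators

/-- A closed acyclic path pattern (CAPP): every symbol occurs an even number of
times, and in the substring strictly between any two consecutive occurrences of
the same symbol every symbol occurs an even number of times. -/
def IsCAPP {α : Type*} [DecidableEq α] (l : List α) : Prop :=
  (∀ a ∈ l, Even (l.count a)) ∧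
  ∀ i j : Fin l.length, i < j → l.get i = l.get j →
    (∀ m : Fin l.length, i < m → m < j → l.get m ≠ l.get i) →
    ∀ b, Even (((l.take j).drop (i + 1)).count b)

/-- One step of the stack automaton reading a CAPP: pop if the symbol is on top
of the stack (an even-numbered occurrence), push otherwise. -/
def stackStep {α : Type*} [DecidableEq α] (s : List α) (a : α) : List α :=
  if s.head? = some a then s.tail else a :: s

/-- The stack state after reading the first `i` symbols of `l`; the stack
states are the vertices of the diagram of a CAPP. -/
def prefixStack {α : Type*} [DecidableEq α] (l : List α) (i : ℕ) : List α :=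
  (l.take i).foldl stackStep []

/-- The diagram edges of the symbols `a` and `b` share a vertex.  (The diagram
edge of a symbol joins the stack state just before its first occurrence to that
state with the symbol pushed.) -/
def EdgeAdj {α : Type*} [DecidableEq α] (l : List α) (a b : α) : Prop :=
  prefixStack l (l.idxOf a) = prefixStack l (l.idxOf b) ∨
  prefixStack l (l.idxOf a) = b :: prefixStack l (l.idxOf b) ∨
  a :: prefixStack l (l.idxOf a) = prefixStack l (l.idxOf b) ∨
  a :: prefixStack l (l.idxOf a) = b :: prefixStack l (l.idxOf b)

instance {α : Type*} [DecidableEq α] (l : List α) (a b : α) :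
    Decidable (EdgeAdj l a b) := by unfold EdgeAdj; infer_instance

/-- `alphaOf l b` is `α_j`: the number of symbols first occurring strictly
before `b` whose diagram edge is adjacent to that of `b`. -/
def alphaOf {α : Type*} [DecidableEq α] (l : List α) (b : α) : ℕ :=
  ((l.eraseDups.takeWhile (fun a => decide (a ≠ b))).filter
    (fun a => decide (EdgeAdj l a b))).length

/-- The multiplicity `m_π(d) = ∏_j (d - α_j)` of a CAPP. -/
noncomputable def cappMult {α : Type*} [DecidableEq α] (l : List α) (d : ℝ) : ℝ :=
  (l.eraseDups.map (fun b => d - (alphaOf l b : ℝ))).prod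

/-- The moment contribution `μ(n_1) ⋯ μ(n_r)` attached to the signature
`σ(π) = (n_1, …, n_r)` of a CAPP. -/
noncomputable def cappMomProd {α : Type*} [DecidableEq α] (l : List α)
    (μ : ℕ → ℝ) : ℝ :=
  (l.eraseDups.map (fun b => μ (l.count b))).prod

/-- `P_k`: equivalence classes of CAPPs of length `k`, represented by their
canonical representatives over the symbols `ℕ` (symbols labelled `0, 1, 2, …`
in order of first occurrence). -/
def cappClasses (k : ℕ) : Set (List ℕ) :=
  {l | IsCAPP l ∧ l.length = k ∧ l.map (fun a => l.eraseDups.idxOf a) = l}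

/-- `P°_k`: all classes of CAPPs of length `k` except the single class in which
only one symbol occurs. -/
def cappClassesCirc (k : ℕ) : Set (List ℕ) :=
  {l ∈ cappClasses k | l.eraseDups.length ≠ 1}

/-- `μ` is the eigenmoment sequence for degree `d`: it vanishes at odd indices,
has `μ 2 = 1/4`, and satisfies the recursion
`μ(2k) = (d^k − d)⁻¹ · ∑_{π ∈ P°_{2k}} m_π(d)·μ(n_1)⋯μ(n_r)` for `k ≥ 2`. -/
def IsEigenmomentSeq (d : ℕ) (μ : ℕ → ℝ) : Prop :=
  (∀ k, Odd k → μ k = 0) ∧ μ 2 = 1 / 4 ∧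
  ∀ k, 2 ≤ k →
    μ (2 * k) = ((d : ℝ) ^ k - (d : ℝ))⁻¹ *
      ∑ᶠ π ∈ cappClassesCirc (2 * k), cappMult π (d : ℝ) * cappMomProd π μ

/-- `c_m`: the `m`-th moment of the semicircle distribution normalized to have
second moment `1/4`; `c_{2k} = binom(2k,k)/(4^k (k+1))` and `c_{2k+1} = 0`. -/
noncomputable def semicircleMoment (m : ℕ) : ℝ :=
  if Even m then (Nat.choose m (m / 2) : ℝ) / (4 ^ (m / 2) * (m / 2 + 1)) else 0

/-! ### Auxiliary machinery -/

lemma even_count_restrict' {α : Type*} [DecidableEq α] (s : List α) :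
    (∀ b, Even (s.count b)) ↔ ∀ b ∈ s, Even (s.count b) := by
  constructor
  · exact fun h b _ => h b
  · intro h b
    by_cases hb : b ∈ s
    · exact h b hb
    · simp [List.count_eq_zero_of_not_mem hb]

instance {α : Type*} [DecidableEq α] (l : List α) : Decidable (IsCAPP l) := by
  unfold IsCAPP
  refine decidable_of_iff
    ((∀ a ∈ l, Even (l.count a)) ∧
    ∀ i j : Fin l.length, i < j → l.get i = l.get j →
      (∀ m : Fin l.length, i < m → m < j → l.get m ≠ l.get i) →
      ∀ b ∈ ((l.take j).drop (i + 1)), Even (((l.take j).drop (i + 1)).count b)) ?_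
  constructor <;> intro ⟨h1, h2⟩ <;> refine ⟨h1, fun i j hij hg hm => ?_⟩
  · exact (even_count_restrict' _).2 (h2 i j hij hg hm)
  · exact (even_count_restrict' _).1 (h2 i j hij hg hm)

instance (k : ℕ) (l : List ℕ) : Decidable (l ∈ cappClasses k) :=
  decidable_of_iff
    (IsCAPP l ∧ l.length = k ∧ l.map (fun a => l.eraseDups.idxOf a) = l) Iff.rfl

instance (k : ℕ) (l : List ℕ) : Decidable (l ∈ cappClassesCirc k) :=
  decidable_of_iff (l ∈ cappClasses k ∧ l.eraseDups.length ≠ 1) Iff.rfl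

lemma mem_eraseDups_loop {α : Type*} [BEq α] [LawfulBEq α] (as : List α) :
    ∀ (bs : List α) (x : α), (x ∈ List.eraseDupsBy.loop (· == ·) as bs ↔ x ∈ as ∨ x ∈ bs) := by
  induction as with
  | nil => intro bs x; simp [List.eraseDupsBy.loop]
  | cons a as ih =>
    intro bs x
    rw [List.eraseDupsBy.loop]
    cases h : bs.any (a == ·) with
    | true =>
      simp only [ih]
      have ha : a ∈ bs := by simpa using h
      constructor
      · rintro (h1 | h1) <;> simp_all
      · rintro (h1 | h1)
        · rcases List.mem_cons.1 h1 with rfl | h1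
          · exact Or.inr ha
          · exact Or.inl h1
        · exact Or.inr h1
    | false =>
      simp only [ih]
      constructor
      · rintro (h1 | h1)
        · exact Or.inl (List.mem_cons_of_mem _ h1)
        · rcases List.mem_cons.1 h1 with rfl | h1
          · exact Or.inl List.mem_cons_self
          · exact Or.inr h1
      · rintro (h1 | h1)
        · rcases List.mem_cons.1 h1 with rfl | h1
          · exact Or.inr List.mem_cons_self
          · exact Or.inl h1
        · exact Or.inr (List.mem_cons_of_mem _ h1)

lemma mem_eraseDups {α : Type*} [BEq α] [LawfulBEq α] {l : List α} {x : α} :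
    x ∈ l.eraseDups ↔ x ∈ l := by
  rw [List.eraseDups, List.eraseDupsBy, mem_eraseDups_loop]
  simp

lemma nodup_eraseDups_loop {α : Type*} [BEq α] [LawfulBEq α] (as : List α) :
    ∀ bs : List α, bs.Nodup → (List.eraseDupsBy.loop (· == ·) as bs).Nodup := by
  induction as with
  | nil => intro bs h; rw [List.eraseDupsBy.loop]; exact List.nodup_reverse.2 h
  | cons a as ih =>
    intro bs h
    rw [List.eraseDupsBy.loop]
    cases hel : bs.any (a == ·) with
    | true => exact ih bs h
    | false =>
      refine ih (a :: bs) (List.nodup_cons.2 ⟨fun hmem => ?_, h⟩)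
      rw [List.any_eq_true.2 ⟨a, hmem, by simp⟩] at hel
      exact Bool.false_ne_true hel.symm

lemma nodup_eraseDups {α : Type*} [BEq α] [LawfulBEq α] (l : List α) :
    l.eraseDups.Nodup :=
  nodup_eraseDups_loop l [] List.nodup_nil

lemma eraseDups_toFinset (l : List ℕ) : l.eraseDups.toFinset = l.toFinset := by
  ext x; simp [List.mem_toFinset, mem_eraseDups]

lemma length_eraseDups (l : List ℕ) : l.eraseDups.length = l.toFinset.card := by
  rw [← List.toFinset_card_of_nodup (nodup_eraseDups l), eraseDups_toFinset]

lemma two_mul_card_le {l : List ℕ} (h : ∀ a ∈ l, Even (l.count a)) :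
    2 * l.toFinset.card ≤ l.length := by
  rw [← List.sum_toFinset_count_eq_length l]
  calc 2 * l.toFinset.card = ∑ _a ∈ l.toFinset, 2 := by
        rw [Finset.sum_const, smul_eq_mul, mul_comm]
    _ ≤ ∑ a ∈ l.toFinset, l.count a := by
        refine Finset.sum_le_sum fun a ha => ?_
        have hal : a ∈ l := List.mem_toFinset.1 ha
        have hpos : l.count a ≠ 0 := by
          simpa using List.count_pos_iff.2 hal |>.ne'
        rcases h a hal with ⟨m, hm⟩
        omega

lemma entry_lt_card {l : List ℕ}
    (hcanon : l.map (fun a => l.eraseDups.idxOf a) = l) {b : ℕ} (hb : b ∈ l) :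
    b < l.toFinset.card := by
  rw [← hcanon] at hb
  rcases List.mem_map.1 hb with ⟨a, ha, rfl⟩
  rw [← length_eraseDups]
  exact List.idxOf_lt_length_iff.2 (mem_eraseDups.2 ha)

def myLists (k : ℕ) : ℕ → List (List ℕ)
  | 0 => [[]]
  | n + 1 => (myLists k n).flatMap (fun l => (List.range k).map (· :: l))

lemma mem_myLists {k : ℕ} : ∀ {l : List ℕ} {n : ℕ}, l.length = n →
    (∀ a ∈ l, a < k) → l ∈ myLists k n := by
  intro l
  induction l with
  | nil => intro n hn _; cases hn; simp [myLists]
  | cons a l ih =>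
    intro n hn hb
    cases hn
    refine List.mem_flatMap.2 ⟨l, ih rfl (fun x hx => hb x (List.mem_cons_of_mem _ hx)), ?_⟩
    exact List.mem_map.2 ⟨a, List.mem_range.2 (hb a List.mem_cons_self), rfl⟩


set_option maxRecDepth 10000 in
lemma filter4 : (myLists 2 4).filter (fun l => decide (l ∈ cappClassesCirc 4)) =
    [[0,1,1,0],[0,0,1,1]] := by decide

set_option maxRecDepth 40000 in
set_option maxHeartbeats 1000000 in
lemma filter6 : (myLists 3 6).filter (fun l => decide (l ∈ cappClassesCirc 6)) =
    [[0,1,1,0,0,0],[0,0,1,1,0,0],[0,0,0,1,1,0],[0,1,1,1,1,0],[0,1,2,2,1,0],[0,1,1,2,2,0],[0,0,0,0,1,1],[0,0,1,1,1,1],[0,0,1,2,2,1],[0,1,1,0,2,2],[0,0,1,1,2,2]] := by decide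

lemma circ_eq_aux {k b : ℕ} {L : List (List ℕ)}
    (hfil : (myLists b k).filter (fun l => decide (l ∈ cappClassesCirc k)) = L)
    (hb : k ≤ 2 * b) :
    cappClassesCirc k = {l : List ℕ | l ∈ L} := by
  ext l
  simp only [Set.mem_setOf_eq]
  constructor
  · intro hl
    obtain ⟨⟨hcapp, hlen, hcanon⟩, hne⟩ := hl
    have hcard : l.toFinset.card ≤ b := by
      have h1 := two_mul_card_le hcapp.1
      rw [hlen] at h1
      omega
    have hmem : l ∈ myLists b k :=
      mem_myLists hlen (fun a ha => lt_of_lt_of_le (entry_lt_card hcanon ha) hcard)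
    have : l ∈ (myLists b k).filter (fun l => decide (l ∈ cappClassesCirc k)) :=
      List.mem_filter.2 ⟨hmem, decide_eq_true ⟨⟨hcapp, hlen, hcanon⟩, hne⟩⟩
    rwa [hfil] at this
  · intro hl
    have : l ∈ (myLists b k).filter (fun l => decide (l ∈ cappClassesCirc k)) := by
      rw [hfil]; exact hl
    exact of_decide_eq_true (List.mem_filter.1 this).2


lemma cm0 (d : ℝ) : cappMult [0,1,1,0] d = (d - 0) * (d - 1) := by
  simp [cappMult, (show ([0,1,1,0]:List ℕ).eraseDups = [0,1] by decide),
    (show alphaOf ([0,1,1,0]:List ℕ) 0 = 0 by decide),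
    (show alphaOf ([0,1,1,0]:List ℕ) 1 = 1 by decide)]
  try ring

lemma cp0 (μ : ℕ → ℝ) : cappMomProd [0,1,1,0] μ = μ 2 * μ 2 := by
  simp [cappMomProd, (show ([0,1,1,0]:List ℕ).eraseDups = [0,1] by decide),
    (show ([0,1,1,0]:List ℕ).count 0 = 2 by decide),
    (show ([0,1,1,0]:List ℕ).count 1 = 2 by decide)]
  try ring

lemma cm1 (d : ℝ) : cappMult [0,0,1,1] d = (d - 0) * (d - 1) := by
  simp [cappMult, (show ([0,0,1,1]:List ℕ).eraseDups = [0,1] by decide),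
    (show alphaOf ([0,0,1,1]:List ℕ) 0 = 0 by decide),
    (show alphaOf ([0,0,1,1]:List ℕ) 1 = 1 by decide)]
  try ring

lemma cp1 (μ : ℕ → ℝ) : cappMomProd [0,0,1,1] μ = μ 2 * μ 2 := by
  simp [cappMomProd, (show ([0,0,1,1]:List ℕ).eraseDups = [0,1] by decide),
    (show ([0,0,1,1]:List ℕ).count 0 = 2 by decide),
    (show ([0,0,1,1]:List ℕ).count 1 = 2 by decide)]
  try ring

lemma cm2 (d : ℝ) : cappMult [0,1,1,0,0,0] d = (d - 0) * (d - 1) := by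
  simp [cappMult, (show ([0,1,1,0,0,0]:List ℕ).eraseDups = [0,1] by decide),
    (show alphaOf ([0,1,1,0,0,0]:List ℕ) 0 = 0 by decide),
    (show alphaOf ([0,1,1,0,0,0]:List ℕ) 1 = 1 by decide)]
  try ring

lemma cp2 (μ : ℕ → ℝ) : cappMomProd [0,1,1,0,0,0] μ = μ 4 * μ 2 := by
  simp [cappMomProd, (show ([0,1,1,0,0,0]:List ℕ).eraseDups = [0,1] by decide),
    (show ([0,1,1,0,0,0]:List ℕ).count 0 = 4 by decide),
    (show ([0,1,1,0,0,0]:List ℕ).count 1 = 2 by decide)]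
  try ring

lemma cm3 (d : ℝ) : cappMult [0,0,1,1,0,0] d = (d - 0) * (d - 1) := by
  simp [cappMult, (show ([0,0,1,1,0,0]:List ℕ).eraseDups = [0,1] by decide),
    (show alphaOf ([0,0,1,1,0,0]:List ℕ) 0 = 0 by decide),
    (show alphaOf ([0,0,1,1,0,0]:List ℕ) 1 = 1 by decide)]
  try ring

lemma cp3 (μ : ℕ → ℝ) : cappMomProd [0,0,1,1,0,0] μ = μ 4 * μ 2 := by
  simp [cappMomProd, (show ([0,0,1,1,0,0]:List ℕ).eraseDups = [0,1] by decide),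
    (show ([0,0,1,1,0,0]:List ℕ).count 0 = 4 by decide),
    (show ([0,0,1,1,0,0]:List ℕ).count 1 = 2 by decide)]
  try ring

lemma cm4 (d : ℝ) : cappMult [0,0,0,1,1,0] d = (d - 0) * (d - 1) := by
  simp [cappMult, (show ([0,0,0,1,1,0]:List ℕ).eraseDups = [0,1] by decide),
    (show alphaOf ([0,0,0,1,1,0]:List ℕ) 0 = 0 by decide),
    (show alphaOf ([0,0,0,1,1,0]:List ℕ) 1 = 1 by decide)]
  try ring

lemma cp4 (μ : ℕ → ℝ) : cappMomProd [0,0,0,1,1,0] μ = μ 4 * μ 2 := by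
  simp [cappMomProd, (show ([0,0,0,1,1,0]:List ℕ).eraseDups = [0,1] by decide),
    (show ([0,0,0,1,1,0]:List ℕ).count 0 = 4 by decide),
    (show ([0,0,0,1,1,0]:List ℕ).count 1 = 2 by decide)]
  try ring

lemma cm5 (d : ℝ) : cappMult [0,1,1,1,1,0] d = (d - 0) * (d - 1) := by
  simp [cappMult, (show ([0,1,1,1,1,0]:List ℕ).eraseDups = [0,1] by decide),
    (show alphaOf ([0,1,1,1,1,0]:List ℕ) 0 = 0 by decide),
    (show alphaOf ([0,1,1,1,1,0]:List ℕ) 1 = 1 by decide)]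
  try ring

lemma cp5 (μ : ℕ → ℝ) : cappMomProd [0,1,1,1,1,0] μ = μ 2 * μ 4 := by
  simp [cappMomProd, (show ([0,1,1,1,1,0]:List ℕ).eraseDups = [0,1] by decide),
    (show ([0,1,1,1,1,0]:List ℕ).count 0 = 2 by decide),
    (show ([0,1,1,1,1,0]:List ℕ).count 1 = 4 by decide)]
  try ring

lemma cm6 (d : ℝ) : cappMult [0,1,2,2,1,0] d = (d - 0) * (d - 1) * (d - 1) := by
  simp [cappMult, (show ([0,1,2,2,1,0]:List ℕ).eraseDups = [0,1,2] by decide),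
    (show alphaOf ([0,1,2,2,1,0]:List ℕ) 0 = 0 by decide),
    (show alphaOf ([0,1,2,2,1,0]:List ℕ) 1 = 1 by decide),
    (show alphaOf ([0,1,2,2,1,0]:List ℕ) 2 = 1 by decide)]
  try ring

lemma cp6 (μ : ℕ → ℝ) : cappMomProd [0,1,2,2,1,0] μ = μ 2 * μ 2 * μ 2 := by
  simp [cappMomProd, (show ([0,1,2,2,1,0]:List ℕ).eraseDups = [0,1,2] by decide),
    (show ([0,1,2,2,1,0]:List ℕ).count 0 = 2 by decide),
    (show ([0,1,2,2,1,0]:List ℕ).count 1 = 2 by decide),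
    (show ([0,1,2,2,1,0]:List ℕ).count 2 = 2 by decide)]
  try ring

lemma cm7 (d : ℝ) : cappMult [0,1,1,2,2,0] d = (d - 0) * (d - 1) * (d - 2) := by
  simp [cappMult, (show ([0,1,1,2,2,0]:List ℕ).eraseDups = [0,1,2] by decide),
    (show alphaOf ([0,1,1,2,2,0]:List ℕ) 0 = 0 by decide),
    (show alphaOf ([0,1,1,2,2,0]:List ℕ) 1 = 1 by decide),
    (show alphaOf ([0,1,1,2,2,0]:List ℕ) 2 = 2 by decide)]
  try ring

lemma cp7 (μ : ℕ → ℝ) : cappMomProd [0,1,1,2,2,0] μ = μ 2 * μ 2 * μ 2 := by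
  simp [cappMomProd, (show ([0,1,1,2,2,0]:List ℕ).eraseDups = [0,1,2] by decide),
    (show ([0,1,1,2,2,0]:List ℕ).count 0 = 2 by decide),
    (show ([0,1,1,2,2,0]:List ℕ).count 1 = 2 by decide),
    (show ([0,1,1,2,2,0]:List ℕ).count 2 = 2 by decide)]
  try ring

lemma cm8 (d : ℝ) : cappMult [0,0,0,0,1,1] d = (d - 0) * (d - 1) := by
  simp [cappMult, (show ([0,0,0,0,1,1]:List ℕ).eraseDups = [0,1] by decide),
    (show alphaOf ([0,0,0,0,1,1]:List ℕ) 0 = 0 by decide),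
    (show alphaOf ([0,0,0,0,1,1]:List ℕ) 1 = 1 by decide)]
  try ring

lemma cp8 (μ : ℕ → ℝ) : cappMomProd [0,0,0,0,1,1] μ = μ 4 * μ 2 := by
  simp [cappMomProd, (show ([0,0,0,0,1,1]:List ℕ).eraseDups = [0,1] by decide),
    (show ([0,0,0,0,1,1]:List ℕ).count 0 = 4 by decide),
    (show ([0,0,0,0,1,1]:List ℕ).count 1 = 2 by decide)]
  try ring

lemma cm9 (d : ℝ) : cappMult [0,0,1,1,1,1] d = (d - 0) * (d - 1) := by
  simp [cappMult, (show ([0,0,1,1,1,1]:List ℕ).eraseDups = [0,1] by decide),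
    (show alphaOf ([0,0,1,1,1,1]:List ℕ) 0 = 0 by decide),
    (show alphaOf ([0,0,1,1,1,1]:List ℕ) 1 = 1 by decide)]
  try ring

lemma cp9 (μ : ℕ → ℝ) : cappMomProd [0,0,1,1,1,1] μ = μ 2 * μ 4 := by
  simp [cappMomProd, (show ([0,0,1,1,1,1]:List ℕ).eraseDups = [0,1] by decide),
    (show ([0,0,1,1,1,1]:List ℕ).count 0 = 2 by decide),
    (show ([0,0,1,1,1,1]:List ℕ).count 1 = 4 by decide)]
  try ring

lemma cm10 (d : ℝ) : cappMult [0,0,1,2,2,1] d = (d - 0) * (d - 1) * (d - 1) := by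
  simp [cappMult, (show ([0,0,1,2,2,1]:List ℕ).eraseDups = [0,1,2] by decide),
    (show alphaOf ([0,0,1,2,2,1]:List ℕ) 0 = 0 by decide),
    (show alphaOf ([0,0,1,2,2,1]:List ℕ) 1 = 1 by decide),
    (show alphaOf ([0,0,1,2,2,1]:List ℕ) 2 = 1 by decide)]
  try ring

lemma cp10 (μ : ℕ → ℝ) : cappMomProd [0,0,1,2,2,1] μ = μ 2 * μ 2 * μ 2 := by
  simp [cappMomProd, (show ([0,0,1,2,2,1]:List ℕ).eraseDups = [0,1,2] by decide),
    (show ([0,0,1,2,2,1]:List ℕ).count 0 = 2 by decide),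
    (show ([0,0,1,2,2,1]:List ℕ).count 1 = 2 by decide),
    (show ([0,0,1,2,2,1]:List ℕ).count 2 = 2 by decide)]
  try ring

lemma cm11 (d : ℝ) : cappMult [0,1,1,0,2,2] d = (d - 0) * (d - 1) * (d - 1) := by
  simp [cappMult, (show ([0,1,1,0,2,2]:List ℕ).eraseDups = [0,1,2] by decide),
    (show alphaOf ([0,1,1,0,2,2]:List ℕ) 0 = 0 by decide),
    (show alphaOf ([0,1,1,0,2,2]:List ℕ) 1 = 1 by decide),
    (show alphaOf ([0,1,1,0,2,2]:List ℕ) 2 = 1 by decide)]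
  try ring

lemma cp11 (μ : ℕ → ℝ) : cappMomProd [0,1,1,0,2,2] μ = μ 2 * μ 2 * μ 2 := by
  simp [cappMomProd, (show ([0,1,1,0,2,2]:List ℕ).eraseDups = [0,1,2] by decide),
    (show ([0,1,1,0,2,2]:List ℕ).count 0 = 2 by decide),
    (show ([0,1,1,0,2,2]:List ℕ).count 1 = 2 by decide),
    (show ([0,1,1,0,2,2]:List ℕ).count 2 = 2 by decide)]
  try ring

lemma cm12 (d : ℝ) : cappMult [0,0,1,1,2,2] d = (d - 0) * (d - 1) * (d - 2) := by
  simp [cappMult, (show ([0,0,1,1,2,2]:List ℕ).eraseDups = [0,1,2] by decide),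
    (show alphaOf ([0,0,1,1,2,2]:List ℕ) 0 = 0 by decide),
    (show alphaOf ([0,0,1,1,2,2]:List ℕ) 1 = 1 by decide),
    (show alphaOf ([0,0,1,1,2,2]:List ℕ) 2 = 2 by decide)]
  try ring

lemma cp12 (μ : ℕ → ℝ) : cappMomProd [0,0,1,1,2,2] μ = μ 2 * μ 2 * μ 2 := by
  simp [cappMomProd, (show ([0,0,1,1,2,2]:List ℕ).eraseDups = [0,1,2] by decide),
    (show ([0,0,1,1,2,2]:List ℕ).count 0 = 2 by decide),
    (show ([0,0,1,1,2,2]:List ℕ).count 1 = 2 by decide),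
    (show ([0,0,1,1,2,2]:List ℕ).count 2 = 2 by decide)]
  try ring

/-- For every `d ≥ 2`, the eigenmoment sequence agrees with the moments of the
normalized semicircle distribution up to order seven; in particular
`μ_d(4) = 1/8` and `μ_d(6) = 5/64`. -/
theorem stmt3 (d : ℕ) (hd : 2 ≤ d) (μ : ℕ → ℝ) (hμ : IsEigenmomentSeq d μ) :
    (∀ k, 1 ≤ k → k ≤ 7 → μ k = semicircleMoment k) ∧
    μ 4 = 1 / 8 ∧ μ 6 = 5 / 64 := by
  have h2 : μ 2 = 1 / 4 := hμ.2.1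
  have hodd := hμ.1
  have hd2 : (2:ℝ) ≤ (d:ℝ) := by exact_mod_cast hd
  have hset4 : cappClassesCirc 4 =
      ↑(([[0,1,1,0],[0,0,1,1]] : List (List ℕ)).toFinset) := by
    rw [circ_eq_aux filter4 (by norm_num), List.coe_toFinset]
  have hset6 : cappClassesCirc 6 =
      ↑(([[0,1,1,0,0,0],[0,0,1,1,0,0],[0,0,0,1,1,0],[0,1,1,1,1,0],[0,1,2,2,1,0],[0,1,1,2,2,0],[0,0,0,0,1,1],[0,0,1,1,1,1],[0,0,1,2,2,1],[0,1,1,0,2,2],[0,0,1,1,2,2]] : List (List ℕ)).toFinset) := by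
    rw [circ_eq_aux filter6 (by norm_num), List.coe_toFinset]
  have hne4 : ((d:ℝ)^2 - d) ≠ 0 := by nlinarith
  have hne6 : ((d:ℝ)^3 - d) ≠ 0 := by nlinarith [sq_nonneg ((d:ℝ) - 1)]
  have hμ4 : μ 4 = 1 / 8 := by
    have hrec := hμ.2.2 2 le_rfl
    norm_num only at hrec
    rw [hset4, finsum_mem_coe_finset,
      List.sum_toFinset _ (by decide : ([[0,1,1,0],[0,0,1,1]] : List (List ℕ)).Nodup)] at hrec
    simp only [List.map_cons, List.map_nil, List.sum_cons, List.sum_nil,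
      cm0, cp0, cm1, cp1, h2] at hrec
    calc μ 4 = ((d:ℝ)^2 - d)⁻¹ * (((d:ℝ)^2 - d) * (1/8)) := by rw [hrec]; (congr 1; ring)
      _ = 1 / 8 := by rw [inv_mul_cancel_left₀ hne4]
  have hμ6 : μ 6 = 5 / 64 := by
    have hrec := hμ.2.2 3 (by norm_num)
    norm_num only at hrec
    rw [hset6, finsum_mem_coe_finset,
      List.sum_toFinset _ (by decide : ([[0,1,1,0,0,0],[0,0,1,1,0,0],[0,0,0,1,1,0],[0,1,1,1,1,0],[0,1,2,2,1,0],[0,1,1,2,2,0],[0,0,0,0,1,1],[0,0,1,1,1,1],[0,0,1,2,2,1],[0,1,1,0,2,2],[0,0,1,1,2,2]] : List (List ℕ)).Nodup)] at hrec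
    simp only [List.map_cons, List.map_nil, List.sum_cons, List.sum_nil,
      cm2, cp2, cm3, cp3, cm4, cp4, cm5, cp5, cm6, cp6, cm7, cp7, cm8, cp8,
      cm9, cp9, cm10, cp10, cm11, cp11, cm12, cp12, h2, hμ4] at hrec
    calc μ 6 = ((d:ℝ)^3 - d)⁻¹ * (((d:ℝ)^3 - d) * (5/64)) := by rw [hrec]; (congr 1; ring)
      _ = 5 / 64 := by rw [inv_mul_cancel_left₀ hne6]
  refine ⟨?_, hμ4, hμ6⟩
  intro k h1 h7
  interval_cases k
  · rw [hodd 1 ⟨0, by norm_num⟩]; norm_num [semicircleMoment, Nat.even_iff]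
  · rw [h2]; norm_num [semicircleMoment, Nat.even_iff, Nat.choose]
  · rw [hodd 3 ⟨1, by norm_num⟩]; norm_num [semicircleMoment, Nat.even_iff]
  · rw [hμ4]; norm_num [semicircleMoment, Nat.even_iff, Nat.choose]
  · rw [hodd 5 ⟨2, by norm_num⟩]; norm_num [semicircleMoment, Nat.even_iff]
  · rw [hμ6]; norm_num [semicircleMoment, Nat.even_iff, Nat.choose]
  · rw [hodd 7 ⟨3, by norm_num⟩]; norm_num [semicircleMoment, Nat.even_iff]
end

section
/- For every integer d ≥ 2, the eighth eigenmoment satisfies μ_d(8) = 7/128 + 1/(128(d² + d + 1)); in particular it differs from the eighth moment c_8 = 7/128 of the normalized semicircle distribution. -/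
open scoped BigOperators

/-! ### Auxiliary machinery -/

namespace CappAux

theorem mem_loop (x : ℕ) : ∀ (as bs : List ℕ), x ∈ List.eraseDupsBy.loop (· == ·) as bs ↔ x ∈ as ∨ x ∈ bs := by
  intro as
  induction as with
  | nil => intro bs; simp [List.eraseDupsBy.loop]
  | cons a t ih =>
    intro bs
    rw [List.eraseDupsBy.loop]
    cases h : bs.any (fun x => a == x) with
    | true =>
      simp only [ih, List.mem_cons]
      have : a ∈ bs := by simpa using h
      constructor
      · rintro (h1|h1); exact Or.inl (Or.inr h1); exact Or.inr h1
      · rintro ((rfl|h1)|h1); exact Or.inr this; exact Or.inl h1; exact Or.inr h1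
    | false =>
      simp only [ih, List.mem_cons]
      tauto

theorem mem_eraseDups' (x : ℕ) (l : List ℕ) : x ∈ l.eraseDups ↔ x ∈ l := by
  rw [List.eraseDups, List.eraseDupsBy, mem_loop]; simp

theorem loop_concat (a : ℕ) : ∀ (as bs : List ℕ),
    List.eraseDupsBy.loop (· == ·) (as ++ [a]) bs =
      if a ∈ List.eraseDupsBy.loop (· == ·) as bs then List.eraseDupsBy.loop (· == ·) as bs
      else List.eraseDupsBy.loop (· == ·) as bs ++ [a] := by
  intro as
  induction as with
  | nil =>
    intro bs
    simp only [List.nil_append, List.eraseDupsBy.loop]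
    cases h : bs.any (fun x => a == x) with
    | true =>
      have : a ∈ bs := by simpa using h
      simp [List.eraseDupsBy.loop, this]
    | false =>
      have : a ∉ bs := by simp at h; exact fun ha => h a ha rfl
      simp [List.eraseDupsBy.loop, this]
  | cons c t ih =>
    intro bs
    rw [List.cons_append, List.eraseDupsBy.loop]
    cases h : bs.any (fun x => c == x) with
    | true =>
      simp only []
      conv_rhs => rw [List.eraseDupsBy.loop]
      simp only [h]
      exact ih bs
    | false =>
      simp only []
      conv_rhs => rw [List.eraseDupsBy.loop]
      simp only [h]
      exact ih (c :: bs)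

theorem eraseDups_concat (l : List ℕ) (a : ℕ) :
    (l ++ [a]).eraseDups =
      if a ∈ l.eraseDups then l.eraseDups else l.eraseDups ++ [a] := by
  rw [List.eraseDups, List.eraseDupsBy, loop_concat]; rfl

theorem map_eq_self {f : ℕ → ℕ} : ∀ {l : List ℕ}, l.map f = l ↔ ∀ a ∈ l, f a = a := by
  intro l
  induction l with
  | nil => simp
  | cons a t ih => simp [ih]

def genRGS : ℕ → List (List ℕ)
  | 0 => [[]]
  | n+1 => (genRGS n).flatMap
      (fun t => (List.range (t.eraseDups.length + 1)).map (fun a => t ++ [a]))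

theorem length_of_mem_genRGS : ∀ n l, l ∈ genRGS n → l.length = n := by
  intro n
  induction n with
  | zero => intro l h; simp [genRGS] at h; simp [h]
  | succ n ih =>
    intro l h
    simp only [genRGS, List.mem_flatMap, List.mem_map, List.mem_range] at h
    obtain ⟨t, ht, a, _, rfl⟩ := h
    simp [ih t ht]

theorem nodup_genRGS : ∀ n, (genRGS n).Nodup := by
  intro n
  induction n with
  | zero => simp [genRGS]
  | succ n ih =>
    rw [genRGS, List.nodup_flatMap]
    constructor
    · intro t _
      exact List.nodup_range.map (fun a b h => by simpa using List.append_inj_right h rfl)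
    · refine List.Pairwise.imp_of_mem ?_ ih
      intro t1 t2 h1 h2 hne
      intro x hx1 hx2
      simp only [List.mem_map, List.mem_range] at hx1 hx2
      obtain ⟨a, _, rfl⟩ := hx1
      obtain ⟨b, _, heq⟩ := hx2
      have hl : t2.length = t1.length := by
        rw [length_of_mem_genRGS n t1 h1, length_of_mem_genRGS n t2 h2]
      exact hne (List.append_inj_left heq hl).symm

def Canon (l : List ℕ) : Prop := l.map (fun a => l.eraseDups.idxOf a) = l

theorem canon_drop {t : List ℕ} {a : ℕ} (h : Canon (t ++ [a])) :
    Canon t ∧ a ≤ t.eraseDups.length := by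
  unfold Canon at h ⊢
  rw [map_eq_self] at h
  by_cases hm : a ∈ t.eraseDups
  · have hed : (t ++ [a]).eraseDups = t.eraseDups := by rw [eraseDups_concat, if_pos hm]
    constructor
    · rw [map_eq_self]
      intro b hb
      have := h b (by simp [hb])
      rwa [hed] at this
    · have := h a (by simp)
      rw [hed] at this
      have := List.idxOf_lt_length_iff.2 hm
      omega
  · have hed : (t ++ [a]).eraseDups = t.eraseDups ++ [a] := by rw [eraseDups_concat, if_neg hm]
    have hat : a ∉ t := fun hc => hm ((mem_eraseDups' a t).2 hc)
    constructor
    · rw [map_eq_self]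
      intro b hb
      have := h b (by simp [hb])
      rw [hed, List.idxOf_append_of_mem ((mem_eraseDups' b t).2 hb)] at this
      exact this
    · have := h a (by simp)
      rw [hed, List.idxOf_append_of_notMem hm] at this
      simp at this
      omega

theorem complete : ∀ n (l : List ℕ), l.length = n → Canon l → l ∈ genRGS n := by
  intro n
  induction n with
  | zero => intro l h _; simp [List.length_eq_zero_iff] at h; simp [h, genRGS]
  | succ n ih =>
    intro l hlen hc
    have hne : l ≠ [] := by intro h; rw [h] at hlen; simp at hlen
    obtain ⟨t, a, rfl⟩ : ∃ t a, l = t ++ [a] :=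
      ⟨l.dropLast, l.getLast hne, (List.dropLast_append_getLast hne).symm⟩
    obtain ⟨hct, hle⟩ := canon_drop hc
    have hlt : t.length = n := by simp at hlen; omega
    simp only [genRGS, List.mem_flatMap]
    exact ⟨t, ih t hlt hct, List.mem_map.2 ⟨a, List.mem_range.2 (by omega), rfl⟩⟩

/-- Decidable version of `IsCAPP` for lists of naturals. -/
def IsCAPP' (l : List ℕ) : Prop :=
  (∀ a ∈ l, Even (l.count a)) ∧
  ∀ i j : Fin l.length, i < j → l.get i = l.get j →
    (∀ m : Fin l.length, i < m → m < j → l.get m ≠ l.get i) →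
    ∀ b ∈ (l.take j).drop (i + 1), Even (((l.take j).drop (i + 1)).count b)

instance : DecidablePred IsCAPP' := fun l => by unfold IsCAPP'; infer_instance

theorem isCAPP_iff (l : List ℕ) : IsCAPP l ↔ IsCAPP' l := by
  unfold IsCAPP IsCAPP'
  refine and_congr Iff.rfl (forall_congr' fun i => forall_congr' fun j =>
    imp_congr Iff.rfl (imp_congr Iff.rfl (imp_congr Iff.rfl ?_)))
  constructor
  · intro h b _; exact h b
  · intro h b
    by_cases hb : b ∈ (l.take j).drop (i+1)
    · exact h b hb
    · simp [List.count_eq_zero_of_not_mem hb]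

def pB (k : ℕ) (l : List ℕ) : Bool :=
  decide (IsCAPP' l) && decide (l.length = k) &&
  decide (l.map (fun a => l.eraseDups.idxOf a) = l) && decide (l.eraseDups.length ≠ 1)

def cappList (k : ℕ) : List (List ℕ) := (genRGS k).filter (pB k)

theorem nodup_cappList (k : ℕ) : (cappList k).Nodup := (nodup_genRGS k).filter _

theorem mem_cappList {k : ℕ} {l : List ℕ} : l ∈ cappList k ↔ l ∈ cappClassesCirc k := by
  rw [cappList, List.mem_filter]
  simp only [pB, Bool.and_eq_true, decide_eq_true_eq]
  constructor
  · rintro ⟨_, ⟨⟨hc, hlen⟩, hcanon⟩, hne⟩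
    exact ⟨⟨(isCAPP_iff l).2 hc, hlen, hcanon⟩, hne⟩
  · rintro ⟨⟨hc, hlen, hcanon⟩, hne⟩
    refine ⟨?_, ⟨⟨(isCAPP_iff l).1 hc, hlen⟩, hcanon⟩, hne⟩
    rw [← hlen]
    exact complete _ l rfl hcanon

theorem circ_eq (k : ℕ) : cappClassesCirc k = ↑(cappList k).toFinset := by
  ext l
  rw [← mem_cappList, Finset.mem_coe, List.mem_toFinset]

theorem sum_eq (k : ℕ) (F : List ℕ → ℝ) :
    (∑ᶠ π ∈ cappClassesCirc k, F π) = ((cappList k).map F).sum := by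
  rw [circ_eq, finsum_mem_coe_finset, List.sum_toFinset F (nodup_cappList k)]

def gTerm (d : ℝ) (μ : ℕ → ℝ) (p : List ℕ × List ℕ) : ℝ :=
  (p.1.map (fun n : ℕ => d - (n : ℝ))).prod * (p.2.map μ).prod

def dataOf (l : List ℕ) : List ℕ × List ℕ :=
  (l.eraseDups.map (fun b => alphaOf l b), l.eraseDups.map (fun b => l.count b))

theorem term_eq (l : List ℕ) (d : ℝ) (μ : ℕ → ℝ) :
    cappMult l d * cappMomProd l μ = gTerm d μ (dataOf l) := by
  unfold cappMult cappMomProd gTerm dataOf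
  simp only [List.map_map]
  rfl

theorem sum_eval (k : ℕ) (d : ℝ) (μ : ℕ → ℝ) :
    (∑ᶠ π ∈ cappClassesCirc k, cappMult π d * cappMomProd π μ)
      = (((cappList k).map dataOf).map (gTerm d μ)).sum := by
  rw [sum_eq, List.map_map]
  exact congrArg List.sum (List.map_congr_left (fun l _ => term_eq l d μ))

end CappAux


set_option maxRecDepth 100000 in
set_option maxHeartbeats 8000000 in
theorem CappAux.data8 : (CappAux.cappList 8).map CappAux.dataOf = [([0, 1], [6, 2]), ([0, 1], [6, 2]), ([0, 1], [6, 2]), ([0, 1], [4, 4]), ([0, 1, 2], [4, 2, 2]), ([0, 1, 1], [4, 2, 2]), ([0, 1], [6, 2]), ([0, 1, 1], [4, 2, 2]), ([0, 1], [4, 4]), ([0, 1, 2], [4, 2, 2]), ([0, 1, 1], [4, 2, 2]), ([0, 1], [6, 2]), ([0, 1], [4, 4]), ([0, 1, 2], [4, 2, 2]), ([0, 1, 1], [4, 2, 2]), ([0, 1], [4, 4]), ([0, 1], [2, 6]), ([0, 1, 2], [2, 4, 2]), ([0, 1, 1], [2, 4, 2]), ([0, 1, 2], [4, 2, 2]),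 ([0, 1, 2], [2, 4, 2]), ([0, 1, 2], [2, 2, 4]), ([0, 1, 2, 3], [2, 2, 2, 2]), ([0, 1, 2, 1], [2, 2, 2, 2]), ([0, 1, 1], [4, 2, 2]), ([0, 1, 1], [2, 4, 2]), ([0, 1, 1, 2], [2, 2, 2, 2]), ([0, 1, 1], [2, 2, 4]), ([0, 1, 1, 2], [2, 2, 2, 2]), ([0, 1, 1, 1], [2, 2, 2, 2]), ([0, 1], [6, 2]), ([0, 1, 1], [4, 2, 2]), ([0, 1], [4, 4]), ([0, 1, 2], [4, 2, 2]), ([0, 1, 1], [4, 2, 2]), ([0, 1, 1], [2, 2, 4]), ([0, 1, 1, 2], [2, 2, 2, 2]), ([0, 1, 1, 1], [2, 2, 2, 2]), ([0, 1], [4, 4]), ([0, 1, 1], [2, 4, 2]), ([0, 1], [2, 6]), ([0, 1, 2], [2, 4, 2]), ([0, 1, 1], [2, 4, 2]), ([0, 1, 2], [4, 2, 2]), ([0, 1, 2, 1], [2, 2, 2, 2]), ([0, 1, 2], [2, 4, 2]), ([0, 1, 2], [2, 2, 4]), ([0, 1, 2, 3], [2, 2, 2, 2]), ([0, 1, 2,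 1], [2, 2, 2, 2]), ([0, 1, 1], [4, 2, 2]), ([0, 1, 1, 1], [2, 2, 2, 2]), ([0, 1, 1], [2, 4, 2]), ([0, 1, 1, 2], [2, 2, 2, 2]), ([0, 1, 1], [2, 2, 4]), ([0, 1, 1, 2], [2, 2, 2, 2]), ([0, 1, 1, 1], [2, 2, 2, 2])] := by decide

/-- For every `d ≥ 2`, the eighth eigenmoment is
`7/128 + 1/(128(d² + d + 1))`; in particular it differs from the eighth moment
`c_8 = 7/128` of the normalized semicircle distribution. -/


theorem stmt4 (d : ℕ) (hd : 2 ≤ d) (μ : ℕ → ℝ) (hμ : IsEigenmomentSeq d μ) :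
    μ 8 = 7 / 128 + 1 / (128 * ((d : ℝ) ^ 2 + d + 1)) ∧
    μ 8 ≠ semicircleMoment 8 := by
  obtain ⟨hodd, h2, hrec⟩ := hμ
  have hd2 : (2:ℝ) ≤ (d:ℝ) := by exact_mod_cast hd
  have hne2 : ((d:ℝ)^2 - d) ≠ 0 := by nlinarith
  have hne3 : ((d:ℝ)^3 - d) ≠ 0 := by nlinarith [sq_nonneg ((d:ℝ) - 1), sq_nonneg (d:ℝ)]
  have hne4 : ((d:ℝ)^4 - d) ≠ 0 := by nlinarith [sq_nonneg ((d:ℝ) - 1), sq_nonneg ((d:ℝ)^2 - 1), sq_nonneg (d:ℝ)]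
  have hdata4 : (CappAux.cappList 4).map CappAux.dataOf = [([0,1],[2,2]), ([0,1],[2,2])] := by decide
  have h4 : μ 4 = 1/8 := by
    have h := hrec 2 le_rfl
    norm_num at h
    rw [CappAux.sum_eval, hdata4] at h
    simp only [List.map_cons, List.map_nil, CappAux.gTerm, List.prod_cons, List.prod_nil,
      List.sum_cons, List.sum_nil, h2] at h
    rw [h, inv_mul_eq_div, div_eq_iff hne2]
    push_cast
    ring
  have hdata6 : (CappAux.cappList 6).map CappAux.dataOf = [([0, 1], [4, 2]), ([0, 1], [4, 2]), ([0, 1], [4, 2]), ([0, 1], [2, 4]), ([0, 1, 2], [2, 2, 2]), ([0, 1, 1], [2, 2, 2]), ([0, 1], [4, 2]), ([0, 1, 1], [2, 2, 2]), ([0, 1], [2, 4]), ([0, 1, 2], [2, 2, 2]), ([0, 1, 1], [2, 2, 2])] := by decide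
  have h6 : μ 6 = 5/64 := by
    have h := hrec 3 (by norm_num)
    norm_num at h
    rw [CappAux.sum_eval, hdata6] at h
    simp only [List.map_cons, List.map_nil, CappAux.gTerm, List.prod_cons, List.prod_nil,
      List.sum_cons, List.sum_nil, h2, h4] at h
    rw [h, inv_mul_eq_div, div_eq_iff hne3]
    push_cast
    ring
  have hX : ((d:ℝ)^2 + d + 1) ≠ 0 := by positivity
  have h8 : μ 8 = 7 / 128 + 1 / (128 * ((d : ℝ) ^ 2 + d + 1)) := by
    have h := hrec 4 (by norm_num)
    norm_num at h
    rw [CappAux.sum_eval, CappAux.data8] at h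
    set_option maxHeartbeats 4000000 in
    simp only [List.map_cons, List.map_nil, CappAux.gTerm, List.prod_cons, List.prod_nil,
      List.sum_cons, List.sum_nil, h2, h4, h6] at h
    rw [h, inv_mul_eq_div, div_eq_iff hne4]
    rw [show (7 / 128 + 1 / (128 * ((d:ℝ)^2 + d + 1))) * ((d:ℝ)^4 - d)
        = (7*((d:ℝ)^4 - (d:ℝ)) + ((d:ℝ)^2 - (d:ℝ)))/128 from by field_simp; ring]
    set_option maxHeartbeats 4000000 in
    push_cast
    set_option maxHeartbeats 4000000 in
    ring
  have hsc : semicircleMoment 8 = 7 / 128 := by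
    unfold semicircleMoment
    rw [if_pos (by decide : Even 8)]
    norm_num [Nat.choose]
  refine ⟨h8, ?_⟩
  rw [h8, hsc]
  have hpos : (0:ℝ) < 1 / (128 * ((d:ℝ)^2 + d + 1)) := by positivity
  intro hc
  linarith
end

section
/- Let G be a simple graph that is acyclic (contains no cycles), let v be a vertex of G, and let c be a closed walk in G based at v. Then the list of edges traversed by c (with multiplicity, in order) is a closed acyclic path pattern: every edge that is traversed is traversed an even number of times, and between any two consecutive traversals of the same edge, every edge that is traversed is traversed an even number of times. -/
open SimpleGraph

section aux
variable {V : Type*} [DecidableEq V] {G : SimpleGraph V}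

private lemma lemB {a b x y : V} (p : G.Walk x y) :
    (G.deleteEdges {s(a,b)}).Reachable x y ∨ (G.deleteEdges {s(a,b)}).Reachable a y ∨
      (G.deleteEdges {s(a,b)}).Reachable b y := by
  induction p with
  | nil => exact Or.inl (Reachable.refl _)
  | @cons x z y h q ih =>
    by_cases he : s(x, z) = s(a, b)
    · rw [Sym2.eq_iff] at he
      rcases he with ⟨rfl, rfl⟩ | ⟨rfl, rfl⟩
      · rcases ih with h1 | h1 | h1
        · exact Or.inr (Or.inr h1)
        · exact Or.inr (Or.inl h1)
        · exact Or.inr (Or.inr h1)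
      · rcases ih with h1 | h1 | h1
        · exact Or.inr (Or.inl h1)
        · exact Or.inr (Or.inl h1)
        · exact Or.inr (Or.inr h1)
    · have hxz : (G.deleteEdges {s(a,b)}).Adj x z := by
        rw [deleteEdges_adj]
        exact ⟨h, by simpa using he⟩
      rcases ih with h1 | h1 | h1
      · exact Or.inl (hxz.reachable.trans h1)
      · exact Or.inr (Or.inl h1)
      · exact Or.inr (Or.inr h1)

private lemma parity {a b : V}
    (hbr : ¬ (G.deleteEdges {s(a,b)}).Reachable a b) {x y : V} (p : G.Walk x y) :
    (G.deleteEdges {s(a,b)}).Reachable x y ↔ Even (p.edges.count s(a,b)) := by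
  induction p with
  | nil => simpa using Reachable.refl _
  | @cons x z y h q ih =>
    rw [Walk.edges_cons, List.count_cons]
    simp only [beq_iff_eq]
    by_cases he : s(x, z) = s(a, b)
    · rw [if_pos he]
      simp only [Nat.even_add_one, ← ih]
      rw [Sym2.eq_iff] at he
      rcases he with ⟨rfl, rfl⟩ | ⟨rfl, rfl⟩
      · constructor
        · intro hxy hzy
          exact hbr (hxy.trans hzy.symm)
        · intro hzy
          rcases lemB q with h1 | h1 | h1
          · exact absurd h1 hzy
          · exact h1
          · exact absurd h1 hzy
      · constructor
        · intro hxy hzy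
          exact hbr (hzy.trans hxy.symm)
        · intro hzy
          rcases lemB q with h1 | h1 | h1
          · exact absurd h1 hzy
          · exact absurd h1 hzy
          · exact h1
    · have hxz : (G.deleteEdges {s(a,b)}).Adj x z := by
        rw [deleteEdges_adj]
        exact ⟨h, by simpa using he⟩
      rw [if_neg he, Nat.add_zero, ← ih]
      exact ⟨fun hxy => hxz.symm.reachable.trans hxy, fun hzy => hxz.reachable.trans hzy⟩

private lemma not_reach (hG : G.IsAcyclic) {a b : V} (hab : G.Adj a b) :
    ¬ (G.deleteEdges {s(a,b)}).Reachable a b := by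
  rw [isAcyclic_iff_forall_adj_isBridge] at hG
  have hbr := hG hab
  rw [isBridge_iff] at hbr
  exact hbr

private lemma even_count_closed (hG : G.IsAcyclic) {v : V} (c : G.Walk v v) (e : Sym2 V) :
    Even (c.edges.count e) := by
  by_cases he : e ∈ c.edges
  · have heE : e ∈ G.edgeSet := c.edges_subset_edgeSet he
    induction e using Sym2.ind with
    | _ a b =>
      have hab : G.Adj a b := heE
      exact (parity (not_reach hG hab) c).mp (Reachable.refl _)
  · simp [List.count_eq_zero_of_not_mem he]

private lemma walk_split {u v : V} (n : ℕ) (p : G.Walk u v) (hn : n ≤ p.length) :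
    ∃ (x : V) (q : G.Walk u x) (r : G.Walk x v), p = q.append r ∧ q.length = n := by
  induction n generalizing u p with
  | zero => exact ⟨u, .nil, p, rfl, rfl⟩
  | succ n ih =>
    cases p with
    | nil => simp at hn
    | cons h q =>
      obtain ⟨x, q', r, hq, hl⟩ := ih q (by simpa using hn)
      exact ⟨x, .cons h q', r, by simp [hq], by simp [hl]⟩

end aux

/-- In an acyclic simple graph, the edge list of any closed walk is a closed
acyclic path pattern. -/
theorem stmt7 {V : Type*} [DecidableEq V] (G : SimpleGraph V)
    (hG : G.IsAcyclic) (v : V) (c : G.Walk v v) :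
    IsCAPP c.edges := by
  constructor
  · intro a _
    exact even_count_closed hG c a
  · intro i j hij heq hmid b
    obtain ⟨i, hi⟩ := i
    obtain ⟨j, hj⟩ := j
    rw [Fin.mk_lt_mk] at hij
    simp only [List.get_eq_getElem] at heq
    have hmid' : ∀ m (hm : m < c.edges.length), i < m → m < j →
        c.edges[m] ≠ c.edges[i] := by
      intro m hm h1 h2
      have := hmid ⟨m, hm⟩ (Fin.mk_lt_mk.mpr h1) (Fin.mk_lt_mk.mpr h2)
      simpa using this
    clear hmid
    show Even (((c.edges.take j).drop (i + 1)).count b)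
    rw [c.length_edges] at hi hj
    obtain ⟨w, q, r, rfl, hq⟩ := walk_split i c (le_of_lt hi)
    cases r with
    | nil =>
      rw [Walk.length_append, Walk.length_nil] at hj
      omega
    | @cons _ x _ h r₂ =>
      have hr₂ : j - i - 1 ≤ r₂.length := by
        rw [Walk.length_append, Walk.length_cons] at hj
        omega
      obtain ⟨y, s, t, rfl, hs⟩ := walk_split (j - i - 1) r₂ hr₂
      cases t with
      | nil =>
        rw [Walk.length_append, Walk.length_cons, Walk.length_append,
          Walk.length_nil] at hj
        omega
      | @cons _ z _ h' t₂ =>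
        have hql : q.edges.length = i := by rw [q.length_edges, hq]
        have hsl : s.edges.length = j - i - 1 := by rw [s.length_edges, hs]
        have hedges : (q.append (Walk.cons h (s.append (Walk.cons h' t₂)))).edges
            = (q.edges ++ [s(w, x)]) ++ (s.edges ++ s(y, z) :: t₂.edges) := by
          simp [Walk.edges_append, Walk.edges_cons]
        have hL1 : (q.edges ++ [s(w, x)]).length = i + 1 := by simp [hql]
        have hlenw : (q.append (Walk.cons h (s.append (Walk.cons h' t₂)))).length
            = i + 1 + (j - i - 1) + (1 + t₂.length) := by
          simp [Walk.length_append, Walk.length_cons, hq, hs]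
          omega
        have hbi : i < (q.append (Walk.cons h (s.append (Walk.cons h' t₂)))).edges.length := by
          rw [Walk.length_edges]; omega
        have hbj : j < (q.append (Walk.cons h (s.append (Walk.cons h' t₂)))).edges.length := by
          rw [Walk.length_edges]; omega
        have hgi : ((q.append (Walk.cons h (s.append (Walk.cons h' t₂)))).edges)[i]'hbi
            = s(w, x) := by
          rw [List.getElem_of_eq hedges]
          rw [List.getElem_append_left (by omega)]
          rw [List.getElem_append_right (by omega)]
          simp [hql]
        have hgj : ((q.append (Walk.cons h (s.append (Walk.cons h' t₂)))).edges)[j]'hbj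
            = s(y, z) := by
          rw [List.getElem_of_eq hedges]
          rw [List.getElem_append_right (by rw [hL1]; omega)]
          rw [List.getElem_append_right (by rw [hsl, hL1]; omega)]
          simp [hsl, hL1, show j - (i + 1) - (j - i - 1) = 0 from by omega]
        have heq' : s(w, x) = s(y, z) := hgi.symm.trans (heq.trans hgj)
        have hseg : ((((q.append (Walk.cons h (s.append (Walk.cons h' t₂)))).edges).take j).drop (i + 1))
            = s.edges := by
          have h1 : (q.append (Walk.cons h (s.append (Walk.cons h' t₂)))).edges
              = ((q.edges ++ [s(w, x)]) ++ s.edges) ++ s(y, z) :: t₂.edges := by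
            rw [hedges]; simp
          have h2 : ((q.edges ++ [s(w, x)]) ++ s.edges).length = j := by
            rw [List.length_append, hL1, hsl]; omega
          rw [h1, List.take_left' h2, List.drop_left' hL1]
        rw [hseg]
        -- the middle walk avoids the edge s(w, x)
        have hnomem : s(w, x) ∉ s.edges := by
          intro hmem
          obtain ⟨k, hk, hke⟩ := List.getElem_of_mem hmem
          rw [hsl] at hk
          have hbm : i + 1 + k <
              (q.append (Walk.cons h (s.append (Walk.cons h' t₂)))).edges.length := by
            rw [Walk.length_edges]; omega
          refine hmid' (i + 1 + k) hbm (by omega) (by omega) ?_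
          have e1 : ((q.append (Walk.cons h (s.append (Walk.cons h' t₂)))).edges)[i + 1 + k]'hbm
              = s(w, x) := by
            rw [List.getElem_of_eq hedges]
            rw [List.getElem_append_right (by rw [hL1]; omega)]
            rw [List.getElem_append_left (by rw [hsl, hL1]; omega)]
            simp only [hL1, Nat.add_sub_cancel_left]
            exact hke
          exact e1.trans hgi.symm
        rw [Sym2.eq_iff] at heq'
        rcases heq' with ⟨rfl, rfl⟩ | ⟨rfl, rfl⟩
        · -- w = y, x = z : impossible, contradicts the bridge property
          exfalso
          have hs' : ∀ e ∈ s.edges, e ∉ ({s(w, x)} : Set (Sym2 V)) := by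
            intro e he hee
            rw [Set.mem_singleton_iff] at hee
            exact hnomem (hee ▸ he)
          have hreach : (G.deleteEdges {s(w, x)}).Reachable x w :=
            ⟨s.toDeleteEdges _ hs'⟩
          exact not_reach hG h hreach.symm
        · -- w = z, x = y : s is a closed walk
          exact even_count_closed hG s b
end

section
/- Every closed acyclic path pattern is realizable as the edge sequence of a closed walk in a tree: for every CAPP π (a finite list over some symbol type), there exist a finite simple graph T that is a tree (connected and acyclic), a vertex v of T, a closed walk c in T based at v, and an injective map φ from the symbols occurring in π to the edges of T, such that the list of edges traversed by c equals the image of π under φ. -/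
namespace Stmt8Aux

variable {α : Type*} [DecidableEq α]

lemma z2_add_self (x : ZMod 2) : x + x = 0 := by revert x; decide

lemma z2_neg (x : ZMod 2) : -x = x := by revert x; decide

/-- Parity vector of the prefix of length `i`. -/
def F (π : List α) (i : ℕ) : {b : α // b ∈ π.toFinset} → ZMod 2 :=
  fun b => ((π.take i).count (b : α) : ZMod 2)

/-- Indicator vector of a symbol. -/
def ind (π : List α) (a : {b : α // b ∈ π.toFinset}) : {b : α // b ∈ π.toFinset} → ZMod 2 :=
  fun b => if (b : α) = (a : α) then 1 else 0

lemma fadd_self (π : List α) (x : {b : α // b ∈ π.toFinset} → ZMod 2) : x + x = 0 :=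
  funext fun b => z2_add_self _

lemma mem_tf (π : List α) {i : ℕ} (hi : i < π.length) : π.get ⟨i, hi⟩ ∈ π.toFinset :=
  List.mem_toFinset.mpr (π.get_mem _)

/-- The symbol at position `i`, as an element of the subtype. -/
def sy (π : List α) (i : ℕ) (hi : i < π.length) : {b : α // b ∈ π.toFinset} :=
  ⟨π.get ⟨i, hi⟩, mem_tf π hi⟩

lemma ind_congr (π : List α) {a a' : {b : α // b ∈ π.toFinset}} (h : (a : α) = (a' : α)) :
    ind π a = ind π a' := by
  funext b; simp [ind, h]

lemma F_succ (π : List α) {i : ℕ} (hi : i < π.length) :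
    F π (i + 1) = F π i + ind π (sy π i hi) := by
  funext b
  simp only [F, ind, Pi.add_apply, sy, List.get_eq_getElem]
  rw [List.take_succ, List.getElem?_eq_getElem hi, List.count_append]
  have h1 : (Option.some π[i]).toList = [π[i]] := rfl
  rw [h1, List.count_singleton']
  by_cases hb : (b : α) = π[i]
  · rw [if_pos hb, if_pos hb.symm]; push_cast; ring
  · rw [if_neg hb, if_neg (fun h => hb h.symm)]; push_cast; ring

lemma F_succ_ne (π : List α) {i : ℕ} (hi : i < π.length) : F π (i + 1) ≠ F π i := by
  intro h
  have h1 := congrFun h (sy π i hi)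
  rw [F_succ π hi] at h1
  simp only [Pi.add_apply, ind, if_pos rfl] at h1
  have : (1 : ZMod 2) = 0 := by
    have := h1
    nth_rewrite 2 [← add_zero (F π i (sy π i hi))] at this
    exact add_left_cancel this
  exact one_ne_zero this

lemma consec (π : List α) (hπ : IsCAPP π) (i j : ℕ) (hi : i < π.length) (hj : j < π.length)
    (hij : i < j) (hget : π.get ⟨i, hi⟩ = π.get ⟨j, hj⟩)
    (hno : ∀ (m : ℕ) (hm : m < π.length), i < m → m < j → π.get ⟨m, hm⟩ ≠ π.get ⟨i, hi⟩) :
    F π j = F π (i + 1) := by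
  funext b
  have hev := hπ.2 ⟨i, hi⟩ ⟨j, hj⟩ (by simpa [Fin.lt_def] using hij) hget
    (fun m h1 h2 => hno m m.isLt (by simpa [Fin.lt_def] using h1)
      (by simpa [Fin.lt_def] using h2)) (b : α)
  have hsplit : π.take j = π.take (i + 1) ++ (π.take j).drop (i + 1) := by
    conv_lhs => rw [← List.take_append_drop (i + 1) (π.take j)]
    rw [List.take_take, min_eq_left (by omega)]
  simp only [F]
  have hc : (π.take j).count (b : α)
      = (π.take (i + 1)).count (b : α) + ((π.take j).drop (i + 1)).count (b : α) := by
    conv_lhs => rw [hsplit]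
    rw [List.count_append]
  obtain ⟨k, hk⟩ := hev
  rw [hc, hk]
  push_cast
  rw [z2_add_self, add_zero]

theorem same_edge (π : List α) (hπ : IsCAPP π) (i j : ℕ) (hi : i < π.length)
    (hj : j < π.length) (hij : i < j) (hget : π.get ⟨i, hi⟩ = π.get ⟨j, hj⟩) :
    F π j = F π i ∨ F π j = F π i + ind π (sy π i hi) := by
  by_cases hex : ∃ m, (i < m ∧ m < j) ∧ ∃ hm : m < π.length, π.get ⟨m, hm⟩ = π.get ⟨i, hi⟩
  · set m := Nat.find hex with hmdef
    obtain ⟨⟨him, hmj⟩, hm, hgm⟩ := Nat.find_spec hex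
    have hmin : ∀ m', i < m' → m' < m → ∀ hm' : m' < π.length,
        π.get ⟨m', hm'⟩ ≠ π.get ⟨i, hi⟩ := by
      intro m' h1 h2 hm' hne
      exact Nat.find_min hex h2 ⟨⟨h1, h2.trans hmj⟩, hm', hne⟩
    have hFm : F π m = F π (i + 1) :=
      consec π hπ i m hi hm him hgm.symm (fun m' hm' h1 h2 => hmin m' h1 h2 hm')
    have hrec := same_edge π hπ m j hm hj hmj (hgm.trans hget)
    have hindeq : ind π (sy π m hm) = ind π (sy π i hi) := ind_congr π hgm
    rw [hindeq, hFm, F_succ π hi] at hrec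
    rcases hrec with h | h
    · right; rw [h]
    · left; rw [h, add_assoc, fadd_self, add_zero]
  · right
    rw [consec π hπ i j hi hj hij hget
      (fun m hm h1 h2 hne => hex ⟨m, ⟨h1, h2⟩, hm, hne⟩), F_succ π hi]
termination_by j - i
decreasing_by omega

section Graph

/-- The set of parity vectors reached along the pattern. -/
noncomputable def S (π : List α) : Finset ({b : α // b ∈ π.toFinset} → ZMod 2) :=
  (Finset.range (π.length + 1)).image (F π)

noncomputable def eqv (π : List α) : {x // x ∈ S π} ≃ Fin (S π).card := (S π).equivFin

lemma F_mem (π : List α) (i : ℕ) : F π (min i π.length) ∈ S π :=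
  Finset.mem_image.mpr ⟨min i π.length, Finset.mem_range.mpr (by omega), rfl⟩

noncomputable def vert (π : List α) (i : ℕ) : Fin (S π).card :=
  eqv π ⟨F π (min i π.length), F_mem π i⟩

lemma vert_eq_iff (π : List α) {i j : ℕ} (hi : i ≤ π.length) (hj : j ≤ π.length) :
    vert π i = vert π j ↔ F π i = F π j := by
  rw [vert, vert, Equiv.apply_eq_iff_eq, Subtype.mk_eq_mk, min_eq_left hi, min_eq_left hj]

lemma vert_stable (π : List α) {i : ℕ} (h : π.length ≤ i) : vert π i = vert π π.length := by
  have h1 : F π (min i π.length) = F π (min π.length π.length) := by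
    rw [min_eq_right h, min_self]
  exact congrArg (eqv π) (Subtype.ext h1)

/-- The tree graph. -/
noncomputable def T (π : List α) : SimpleGraph (Fin (S π).card) :=
  SimpleGraph.fromRel (fun u v => ∃ i, ∃ _ : i < π.length, vert π i = u ∧ vert π (i + 1) = v)

lemma adj_consec (π : List α) {i : ℕ} (hi : i < π.length) :
    (T π).Adj (vert π i) (vert π (i + 1)) := by
  rw [T, SimpleGraph.fromRel_adj]
  refine ⟨?_, Or.inl ⟨i, hi, rfl, rfl⟩⟩
  intro h
  rw [vert_eq_iff π (le_of_lt hi) hi] at h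
  exact F_succ_ne π hi h.symm

lemma edge_rep (π : List α) {e : Sym2 (Fin (S π).card)} (he : e ∈ (T π).edgeSet) :
    ∃ i, ∃ hi : i < π.length, e = s(vert π i, vert π (i + 1)) := by
  induction e using Sym2.ind with
  | _ u v =>
    rw [SimpleGraph.mem_edgeSet, T, SimpleGraph.fromRel_adj] at he
    obtain ⟨hne, h | h⟩ := he
    · obtain ⟨i, hi, h1, h2⟩ := h
      exact ⟨i, hi, by rw [← h1, ← h2]⟩
    · obtain ⟨i, hi, h1, h2⟩ := h
      exact ⟨i, hi, by rw [← h1, ← h2, Sym2.eq_swap]⟩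

lemma edge_det_lt (π : List α) (hπ : IsCAPP π) {i j : ℕ} (hi : i < π.length)
    (hj : j < π.length) (hij : i < j) (hg : π.get ⟨i, hi⟩ = π.get ⟨j, hj⟩) :
    s(vert π i, vert π (i + 1)) = s(vert π j, vert π (j + 1)) := by
  have hse := same_edge π hπ i j hi hj hij hg
  have hFi := F_succ π hi
  have hFj := F_succ π hj
  have hind : ind π (sy π j hj) = ind π (sy π i hi) := ind_congr π hg.symm
  rcases hse with h | h
  · have h2 : F π (j + 1) = F π (i + 1) := by rw [hFj, hFi, h, hind]
    have v1 : vert π j = vert π i := (vert_eq_iff π hj.le hi.le).mpr h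
    have v2 : vert π (j + 1) = vert π (i + 1) := (vert_eq_iff π hj hi).mpr h2
    rw [v1, v2]
  · have h2 : F π (j + 1) = F π i := by
      rw [hFj, hind, h, add_assoc, fadd_self, add_zero]
    have v1 : vert π j = vert π (i + 1) := (vert_eq_iff π hj.le hi).mpr (h.trans hFi.symm)
    have v2 : vert π (j + 1) = vert π i := (vert_eq_iff π hj hi.le).mpr h2
    rw [v1, v2, Sym2.eq_swap]

lemma edge_det (π : List α) (hπ : IsCAPP π) {i j : ℕ} (hi : i < π.length)
    (hj : j < π.length) (hg : π.get ⟨i, hi⟩ = π.get ⟨j, hj⟩) :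
    s(vert π i, vert π (i + 1)) = s(vert π j, vert π (j + 1)) := by
  rcases lt_trichotomy i j with h | h | h
  · exact edge_det_lt π hπ hi hj h hg
  · subst h; rfl
  · exact (edge_det_lt π hπ hj hi h hg.symm).symm

/-- The relabeling map. -/
noncomputable def phi (π : List α) (a : α) : Sym2 (Fin (S π).card) :=
  if _ : a ∈ π then s(vert π (π.idxOf a), vert π (π.idxOf a + 1))
  else s(vert π 0, vert π 0)

lemma phi_get (π : List α) (hπ : IsCAPP π) {i : ℕ} (hi : i < π.length) :
    phi π (π.get ⟨i, hi⟩) = s(vert π i, vert π (i + 1)) := by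
  have hmem : π.get ⟨i, hi⟩ ∈ π := π.get_mem _
  rw [phi, dif_pos hmem]
  have hidx : π.idxOf (π.get ⟨i, hi⟩) < π.length := List.idxOf_lt_length_iff.mpr hmem
  exact edge_det π hπ hidx hi (List.idxOf_get hidx)

noncomputable def mkWalk (π : List α) (i : ℕ) : (T π).Walk (vert π i) (vert π π.length) :=
  if h : i < π.length then .cons (adj_consec π h) (mkWalk π (i + 1))
  else SimpleGraph.Walk.nil.copy (vert_stable π (le_of_not_gt h)).symm rfl
termination_by π.length - i
decreasing_by omega

lemma mkWalk_edges (π : List α) (hπ : IsCAPP π) (i : ℕ) :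
    (mkWalk π i).edges = (π.drop i).map (phi π) := by
  rw [mkWalk]
  split
  · next h =>
    rw [SimpleGraph.Walk.edges_cons, mkWalk_edges π hπ (i + 1),
      List.drop_eq_getElem_cons h, List.map_cons]
    congr 1
    have := (phi_get π hπ h).symm
    simpa [List.get_eq_getElem] using this
  · next h =>
    rw [SimpleGraph.Walk.edges_copy]
    simp [List.drop_eq_nil_of_le (le_of_not_gt h)]
termination_by π.length - i
decreasing_by omega

noncomputable def gval (π : List α) (u : Fin (S π).card) : {b : α // b ∈ π.toFinset} → ZMod 2 :=
  ((eqv π).symm u : {x // x ∈ S π})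

noncomputable def g (π : List α) :
    Sym2 (Fin (S π).card) → ({b : α // b ∈ π.toFinset} → ZMod 2) :=
  Sym2.lift ⟨fun u v => gval π u + gval π v, fun _ _ => add_comm _ _⟩

lemma gval_vert (π : List α) {i : ℕ} (hi : i ≤ π.length) : gval π (vert π i) = F π i := by
  rw [gval, vert, Equiv.symm_apply_apply]
  simp [min_eq_left hi]

lemma g_edge (π : List α) {i : ℕ} (hi : i < π.length) :
    g π s(vert π i, vert π (i + 1)) = ind π (sy π i hi) := by
  have hg : g π s(vert π i, vert π (i + 1)) = gval π (vert π i) + gval π (vert π (i + 1)) :=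
    rfl
  rw [hg, gval_vert π hi.le, gval_vert π hi, F_succ π hi,
    ← add_assoc, fadd_self, zero_add]

lemma walk_sum (π : List α) {u v : Fin (S π).card} (w : (T π).Walk u v) :
    (w.edges.map (g π)).sum = gval π u + gval π v := by
  induction w with
  | nil => simpa using (fadd_self π _).symm
  | @cons a x c h p ih =>
    rw [SimpleGraph.Walk.edges_cons, List.map_cons, List.sum_cons, ih]
    have hg : g π s(a, x) = gval π a + gval π x := rfl
    rw [hg]
    have hx := fadd_self π (gval π x)
    linear_combination hx

lemma sum_apply' (π : List α) (l : List ({b : α // b ∈ π.toFinset} → ZMod 2))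
    (b : {b : α // b ∈ π.toFinset}) : l.sum b = (l.map (fun f => f b)).sum := by
  induction l with
  | nil => rfl
  | cons f t ih => simp [ih]

lemma ind_inj (π : List α) {a b : {b : α // b ∈ π.toFinset}} (h : ind π a = ind π b) :
    (a : α) = (b : α) := by
  have h1 := congrFun h a
  simp only [ind, if_pos rfl] at h1
  by_contra hne
  rw [if_neg hne] at h1
  exact one_ne_zero h1

lemma acyclic (π : List α) (hπ : IsCAPP π) : (T π).IsAcyclic := by
  intro u c hc
  have hlen := hc.three_le_length
  have hnil : c.edges ≠ [] := by
    intro h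
    have := SimpleGraph.Walk.length_edges c
    rw [h] at this
    simp at this
    omega
  obtain ⟨e0, rest, hes⟩ := List.exists_cons_of_ne_nil hnil
  have hsum : ((e0 :: rest).map (g π)).sum = 0 := by
    rw [← hes, walk_sum]; exact fadd_self π _
  have hmem0 : e0 ∈ c.edges := by rw [hes]; exact List.mem_cons_self
  obtain ⟨i0, hi0, he0⟩ := edge_rep π (SimpleGraph.Walk.edges_subset_edgeSet c hmem0)
  have hnodup := hc.edges_nodup
  rw [hes] at hnodup
  have hnotmem : e0 ∉ rest := (List.nodup_cons.mp hnodup).1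
  have happ : (g π e0) (sy π i0 hi0) + ((rest.map (g π)).sum) (sy π i0 hi0) = 0 := by
    have h' := congrFun hsum (sy π i0 hi0)
    rw [List.map_cons, List.sum_cons] at h'
    simpa using h'
  have h1 : g π e0 (sy π i0 hi0) = 1 := by
    rw [he0, g_edge π hi0]; simp [ind]
  have h2 : ((rest.map (g π)).sum) (sy π i0 hi0) = 0 := by
    rw [sum_apply' π]
    apply List.sum_eq_zero
    intro x hx
    obtain ⟨y, hy, rfl⟩ := List.mem_map.mp hx
    obtain ⟨e', he', rfl⟩ := List.mem_map.mp hy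
    have he'c : e' ∈ c.edges := by rw [hes]; exact List.mem_cons_of_mem _ he'
    obtain ⟨i', hi', hrep⟩ := edge_rep π (SimpleGraph.Walk.edges_subset_edgeSet c he'c)
    rw [hrep, g_edge π hi']
    simp only [ind]
    rw [if_neg]
    intro hco
    apply hnotmem
    have heq : e0 = e' := by
      rw [he0, hrep]
      exact edge_det π hπ hi0 hi' hco
    rw [heq]
    exact he'
  rw [h1, h2, add_zero] at happ
  exact one_ne_zero happ

lemma vert_surj (π : List α) (u : Fin (S π).card) : ∃ i, i ≤ π.length ∧ vert π i = u := by
  obtain ⟨i, hir, hFi⟩ := Finset.mem_image.mp ((eqv π).symm u).2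
  have hirr : i < π.length + 1 := Finset.mem_range.mp hir
  refine ⟨i, by omega, ?_⟩
  rw [vert, Equiv.apply_eq_iff_eq_symm_apply]
  have h1 : F π (min i π.length) = F π i := by rw [min_eq_left (by omega)]
  exact Subtype.ext (h1.trans hFi)

lemma reach0 (π : List α) (i : ℕ) (hi : i ≤ π.length) :
    (T π).Reachable (vert π i) (vert π 0) := by
  induction i with
  | zero => exact SimpleGraph.Reachable.refl _
  | succ n ih =>
    exact ((adj_consec π (hi : n < π.length)).symm.reachable).trans (ih (by omega))

lemma connected (π : List α) : (T π).Connected := by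
  rw [SimpleGraph.connected_iff]
  refine ⟨fun u v => ?_, ⟨vert π 0⟩⟩
  obtain ⟨i, hi, rfl⟩ := vert_surj π u
  obtain ⟨j, hj, rfl⟩ := vert_surj π v
  exact (reach0 π i hi).trans (reach0 π j hj).symm

end Graph

end Stmt8Aux

open Stmt8Aux

/-- Every CAPP is realizable as the edge sequence of a closed walk in a finite
tree: there are a finite tree `T`, a vertex `v`, a closed walk `c` at `v`, and
an injective relabeling `φ` of the symbols of `π` by edges of `T` such that the
edge list of `c` is the image of `π` under `φ`. -/
theorem stmt8 {α : Type*} [DecidableEq α] (π : List α) (hπ : IsCAPP π) :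
    ∃ (n : ℕ) (T : SimpleGraph (Fin n)) (_ : T.IsTree) (v : Fin n)
      (c : T.Walk v v) (φ : α → Sym2 (Fin n)),
        Set.InjOn φ {a | a ∈ π} ∧ (∀ a ∈ π, φ a ∈ T.edgeSet) ∧
        c.edges = π.map φ := by
  classical
  have hclosed : vert π π.length = vert π 0 := by
    apply (vert_eq_iff π le_rfl (Nat.zero_le _)).mpr
    funext b
    have hb : (b : α) ∈ π := List.mem_toFinset.mp b.2
    obtain ⟨k, hk⟩ := hπ.1 (b : α) hb
    show ((π.take π.length).count (b : α) : ZMod 2) = ((π.take 0).count (b : α) : ZMod 2)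
    rw [List.take_length, hk]
    push_cast
    rw [z2_add_self]
    simp
  refine ⟨(S π).card, T π, ⟨connected π, acyclic π hπ⟩, vert π 0,
    (mkWalk π 0).copy rfl hclosed, phi π, ?_, ?_, ?_⟩
  · intro a ha b hb hab
    simp only [Set.mem_setOf_eq] at ha hb
    have hia : π.idxOf a < π.length := List.idxOf_lt_length_iff.mpr ha
    have hib : π.idxOf b < π.length := List.idxOf_lt_length_iff.mpr hb
    rw [phi, dif_pos ha, phi, dif_pos hb, Sym2.eq_iff] at hab
    set ia := π.idxOf a with hiadef
    set ib := π.idxOf b with hibdef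
    have hga : π.get ⟨ia, hia⟩ = a := List.idxOf_get hia
    have hgb : π.get ⟨ib, hib⟩ = b := List.idxOf_get hib
    have q1 : F π (ia + 1) = F π ia + ind π (sy π ia hia) := F_succ π hia
    have q2 : F π (ib + 1) = F π ib + ind π (sy π ib hib) := F_succ π hib
    have key : ind π (sy π ia hia) = ind π (sy π ib hib) := by
      rcases hab with ⟨h1, h2⟩ | ⟨h1, h2⟩
      · have e1 : F π ia = F π ib := (vert_eq_iff π hia.le hib.le).mp h1
        have e2 : F π (ia + 1) = F π (ib + 1) := (vert_eq_iff π hia hib).mp h2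
        linear_combination q2 - q1 + e2 - e1
      · have e1 : F π ia = F π (ib + 1) := (vert_eq_iff π hia.le hib).mp h1
        have e2 : F π (ia + 1) = F π ib := (vert_eq_iff π hia hib.le).mp h2
        have c1 : F π ia = F π ib + ind π (sy π ib hib) := e1.trans q2
        have c2 : F π ia + ind π (sy π ia hia) = F π ib := q1.symm.trans e2
        have hsb := fadd_self π (ind π (sy π ib hib))
        linear_combination c2 - c1 - hsb
    have hco := ind_inj π key
    rw [← hga, ← hgb]
    exact hco
  · intro a ha
    rw [phi, dif_pos ha, SimpleGraph.mem_edgeSet]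
    exact adj_consec π (List.idxOf_lt_length_iff.mpr ha)
  · rw [SimpleGraph.Walk.edges_copy, mkWalk_edges π hπ 0, List.drop_zero]
end

section
/- Let G be a simple graph that is acyclic, let p be a walk in G from a vertex u to a vertex v, and let e be an edge of G. Then p traverses e an even number of times if and only if u and v lie in the same connected component of the graph obtained from G by deleting the edge e (i.e., u and v are reachable in G with e removed). -/
open SimpleGraph

private lemma walk_reach_aux {V : Type*} {G : SimpleGraph V} (a b : V) {x y : V}
    (q : G.Walk x y) :
    (G.deleteEdges {s(a,b)}).Reachable x y ∨
    ((G.deleteEdges {s(a,b)}).Reachable x a ∧ (G.deleteEdges {s(a,b)}).Reachable b y) ∨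
    ((G.deleteEdges {s(a,b)}).Reachable x b ∧ (G.deleteEdges {s(a,b)}).Reachable a y) := by
  set H := G.deleteEdges {s(a,b)} with hH
  induction q with
  | nil => exact Or.inl (Reachable.refl _)
  | @cons x w y h q ih =>
    by_cases hxw : s(x, w) = s(a, b)
    · rw [Sym2.eq_iff] at hxw
      rcases hxw with ⟨rfl, rfl⟩ | ⟨rfl, rfl⟩
      · rcases ih with h1 | ⟨h1, h2⟩ | ⟨h1, h2⟩
        · exact Or.inr (Or.inl ⟨Reachable.refl _, h1⟩)
        · exact Or.inl (h1.symm.trans h2)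
        · exact Or.inl h2
      · rcases ih with h1 | ⟨h1, h2⟩ | ⟨h1, h2⟩
        · exact Or.inr (Or.inr ⟨Reachable.refl _, h1⟩)
        · exact Or.inl h2
        · exact Or.inl (h1.symm.trans h2)
    · have hH' : H.Adj x w := by
        rw [hH, deleteEdges_adj]
        exact ⟨h, by simpa using hxw⟩
      rcases ih with h1 | ⟨h1, h2⟩ | ⟨h1, h2⟩
      · exact Or.inl (hH'.reachable.trans h1)
      · exact Or.inr (Or.inl ⟨hH'.reachable.trans h1, h2⟩)
      · exact Or.inr (Or.inr ⟨hH'.reachable.trans h1, h2⟩)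

private lemma count_even_iff_aux {V : Type*} [DecidableEq V] {G : SimpleGraph V}
    (a b : V) (hab : ¬ (G.deleteEdges {s(a,b)}).Reachable a b) {u v : V}
    (p : G.Walk u v) :
    Even (p.edges.count s(a,b)) ↔ (G.deleteEdges {s(a,b)}).Reachable u v := by
  set H := G.deleteEdges {s(a,b)} with hH
  induction p with
  | nil => simpa using Reachable.refl _
  | @cons u w v h q ih =>
    rw [Walk.edges_cons]
    by_cases hxw : s(u, w) = s(a, b)
    · rw [hxw, List.count_cons_self, Nat.even_add_one]
      have hne : ¬ H.Reachable u w := by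
        rw [Sym2.eq_iff] at hxw
        rcases hxw with ⟨rfl, rfl⟩ | ⟨rfl, rfl⟩
        · exact hab
        · exact fun hr => hab hr.symm
      constructor
      · intro hodd
        have hwv : ¬ H.Reachable w v := fun hr => hodd (ih.mpr hr)
        rcases walk_reach_aux a b q with h1 | ⟨h1, h2⟩ | ⟨h1, h2⟩
        · exact absurd h1 hwv
        · rw [Sym2.eq_iff] at hxw
          rcases hxw with ⟨rfl, rfl⟩ | ⟨rfl, rfl⟩
          · exact absurd h1.symm hab
          · exact h2
        · rw [Sym2.eq_iff] at hxw
          rcases hxw with ⟨rfl, rfl⟩ | ⟨rfl, rfl⟩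
          · exact h2
          · exact absurd h1 hab
      · intro hr heven
        exact hne (hr.trans (ih.mp heven).symm)
    · rw [List.count_cons_of_ne hxw]
      have hH' : H.Adj u w := by
        rw [hH, deleteEdges_adj]
        exact ⟨h, by simpa using hxw⟩
      exact ⟨fun he => hH'.reachable.trans (ih.mp he),
        fun hr => ih.mpr (hH'.reachable.symm.trans hr)⟩

/-- In an acyclic simple graph, a walk from `u` to `v` traverses an edge `e` an
even number of times if and only if `u` and `v` are reachable in the graph with
`e` deleted. -/
theorem stmt9 {V : Type*} [DecidableEq V] (G : SimpleGraph V)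
    (hG : G.IsAcyclic) {u v : V} (p : G.Walk u v) (e : Sym2 V)
    (he : e ∈ G.edgeSet) :
    Even (p.edges.count e) ↔ (G.deleteEdges {e}).Reachable u v := by
  have hb := (isAcyclic_iff_forall_edge_isBridge.mp hG) he
  revert hb he
  refine Sym2.ind (fun a b he hb => ?_) e
  have hab : ¬ (G.deleteEdges {s(a,b)}).Reachable a b := isBridge_iff.mp hb
  exact count_even_iff_aux a b hab p
end
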